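/- Let D(t) be a differentiable family of symmetric positive definite k×k matrices, and define M(t) ∈ ℝ^{m×m} as the block matrix [[0,0],[0,D(t)]]. Then the derivative of the Moore–Penrose pseudoinverse satisfies d/dt M(t)^† = -M(t)^† (dM(t)/dt) M(t)^†. -/

import Mathlib

open Matrix

lemma diffAt_det {k : ℕ} (A : ℝ → Matrix (Fin k) (Fin k) ℝ) (t : ℝ)
    (h : ∀ i j, DifferentiableAt ℝ (fun s => A s i j) t) :
    DifferentiableAt ℝ (fun s => (A s).det) t := by
  simp only [Matrix.det_apply']
  refine DifferentiableAt.fun_sum fun σ _ => DifferentiableAt.const_mul ?_ _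
  exact (HasFDerivAt.finset_prod
    (fun i _ => (h (σ i) i).hasFDerivAt)).differentiableAt

lemma diffAt_inv_entry {k : ℕ} (A : ℝ → Matrix (Fin k) (Fin k) ℝ) (t : ℝ)
    (hdet : (A t).det ≠ 0)
    (h : ∀ i j, DifferentiableAt ℝ (fun s => A s i j) t) (i j : Fin k) :
    DifferentiableAt ℝ (fun s => (A s)⁻¹ i j) t := by
  have hadj : DifferentiableAt ℝ (fun s => (A s).adjugate i j) t := by
    simp only [Matrix.adjugate_apply]
    refine diffAt_det _ t fun i' j' => ?_
    by_cases hij : i' = j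
    · simp only [hij, Matrix.updateRow_self]
      exact differentiableAt_const _
    · simp only [Matrix.updateRow_ne hij]
      exact h i' j'
  have : (fun s => (A s)⁻¹ i j)
      = fun s => (Ring.inverse (A s).det) * (A s).adjugate i j := by
    funext s; rw [Matrix.inv_def]; simp [Matrix.smul_apply]
  rw [this]
  refine DifferentiableAt.mul ?_ hadj
  have : (fun s => Ring.inverse (A s).det) = fun s => ((A s).det)⁻¹ := by
    funext s; simp [Ring.inverse_eq_inv']
  rw [this]
  exact (diffAt_det A t h).inv hdet

lemma hasDerivAt_inv_entry {k : ℕ} (D D' : ℝ → Matrix (Fin k) (Fin k) ℝ)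
    (hD : ∀ t, (D t).PosDef)
    (hdiff : ∀ t i j, HasDerivAt (fun s => D s i j) (D' t i j) t) (t : ℝ)
    (i j : Fin k) :
    HasDerivAt (fun s => (D s)⁻¹ i j) ((-(D t)⁻¹ * D' t * (D t)⁻¹) i j) t := by
  have hdet : ∀ s, (D s).det ≠ 0 := fun s => (hD s).det_pos.ne'
  have hdiffinv : ∀ i j, DifferentiableAt ℝ (fun s => (D s)⁻¹ i j) t :=
    fun i j => diffAt_inv_entry D t (hdet t)
      (fun i j => (hdiff t i j).differentiableAt) i j
  set G : Matrix (Fin k) (Fin k) ℝ :=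
    Matrix.of fun i j => deriv (fun s => (D s)⁻¹ i j) t with hG
  have hGd : ∀ i j, HasDerivAt (fun s => (D s)⁻¹ i j) (G i j) t :=
    fun i j => (hdiffinv i j).hasDerivAt
  have hid : ∀ s, D s * (D s)⁻¹ = 1 := fun s => Matrix.mul_nonsing_inv _ (Ne.isUnit (hdet s))
  -- differentiate the identity entrywise
  have hsum : ∀ i j, (D' t * (D t)⁻¹ + D t * G) i j = 0 := by
    intro i j
    have h1 : HasDerivAt (fun s => ∑ l, D s i l * (D s)⁻¹ l j)
        (∑ l, (D' t i l * (D t)⁻¹ l j + D t i l * G l j)) t :=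
      HasDerivAt.fun_sum fun l _ => (hdiff t i l).mul (hGd l j)
    have h2 : (fun s => ∑ l, D s i l * (D s)⁻¹ l j)
        = fun _ => (1 : Matrix (Fin k) (Fin k) ℝ) i j := by
      funext s; rw [← Matrix.mul_apply, hid s]
    rw [h2] at h1
    have h3 := h1.unique (hasDerivAt_const _ _)
    simp only [Matrix.add_apply, Matrix.mul_apply, Finset.sum_add_distrib] at h3 ⊢
    exact h3
  have hmat : D' t * (D t)⁻¹ + D t * G = 0 := by
    ext i j; exact hsum i j
  have hDG : D t * G = -(D' t * (D t)⁻¹) := by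
    rw [eq_neg_iff_add_eq_zero, add_comm]; exact hmat
  have hGeq : G = -(D t)⁻¹ * D' t * (D t)⁻¹ := by
    have := congrArg (fun X => (D t)⁻¹ * X) hDG
    simp only [← Matrix.mul_assoc, Matrix.mul_neg] at this
    rw [Matrix.nonsing_inv_mul _ (Ne.isUnit (hdet t)), Matrix.one_mul] at this
    rw [this, Matrix.neg_mul, Matrix.neg_mul]
  rw [← hGeq]
  exact hGd i j
/-- `P` is the Moore–Penrose pseudoinverse of `M`: the four Penrose conditions. -/
def IsMoorePenrose {m : Type*} [Fintype m] [DecidableEq m]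
    (M P : Matrix m m ℝ) : Prop :=
  M * P * M = M ∧ P * M * P = P ∧ (M * P)ᵀ = M * P ∧ (P * M)ᵀ = P * M

/-- Let `D(t)` be a differentiable family of symmetric positive definite `k×k`
matrices and `M(t) = [[0,0],[0,D(t)]]`. Then `M(t)† = [[0,0],[0,D(t)⁻¹]]` is the
Moore–Penrose pseudoinverse of `M(t)`, and its derivative satisfies
`d/dt M(t)† = -M(t)† (dM(t)/dt) M(t)†` (stated entrywise). -/
theorem deriv_pseudoinverse_block (p k : ℕ)
    (D D' : ℝ → Matrix (Fin k) (Fin k) ℝ)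
    (hD : ∀ t, (D t).PosDef)
    (hdiff : ∀ t i j, HasDerivAt (fun s => D s i j) (D' t i j) t) :
    (∀ t, IsMoorePenrose
        (Matrix.fromBlocks (0 : Matrix (Fin p) (Fin p) ℝ) (0 : Matrix (Fin p) (Fin k) ℝ)
          (0 : Matrix (Fin k) (Fin p) ℝ) (D t))
        (Matrix.fromBlocks (0 : Matrix (Fin p) (Fin p) ℝ) (0 : Matrix (Fin p) (Fin k) ℝ)
          (0 : Matrix (Fin k) (Fin p) ℝ) (D t)⁻¹)) ∧
    (∀ t i j, HasDerivAt
      (fun s => (Matrix.fromBlocks (0 : Matrix (Fin p) (Fin p) ℝ)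
          (0 : Matrix (Fin p) (Fin k) ℝ) (0 : Matrix (Fin k) (Fin p) ℝ) (D s)⁻¹) i j)
      ((-(Matrix.fromBlocks (0 : Matrix (Fin p) (Fin p) ℝ) (0 : Matrix (Fin p) (Fin k) ℝ)
            (0 : Matrix (Fin k) (Fin p) ℝ) (D t)⁻¹) *
          (Matrix.fromBlocks (0 : Matrix (Fin p) (Fin p) ℝ) (0 : Matrix (Fin p) (Fin k) ℝ)
            (0 : Matrix (Fin k) (Fin p) ℝ) (D' t)) *
          (Matrix.fromBlocks (0 : Matrix (Fin p) (Fin p) ℝ) (0 : Matrix (Fin p) (Fin k) ℝ)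
            (0 : Matrix (Fin k) (Fin p) ℝ) (D t)⁻¹)) i j) t) := by
  constructor
  · intro t
    have hdet : IsUnit (D t).det := Ne.isUnit (hD t).det_pos.ne'
    have h1 : D t * (D t)⁻¹ = 1 := Matrix.mul_nonsing_inv _ hdet
    have h2 : (D t)⁻¹ * D t = 1 := Matrix.nonsing_inv_mul _ hdet
    refine ⟨?_, ?_, ?_, ?_⟩ <;>
      simp [Matrix.fromBlocks_multiply, Matrix.fromBlocks_transpose, h1, h2,
        Matrix.mul_assoc, Matrix.nonsing_inv_mul_cancel_right _ _ hdet,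
        Matrix.mul_nonsing_inv_cancel_left _ _ hdet]
  · intro t
    have hprod :
        (-(Matrix.fromBlocks (0 : Matrix (Fin p) (Fin p) ℝ) (0 : Matrix (Fin p) (Fin k) ℝ)
              (0 : Matrix (Fin k) (Fin p) ℝ) (D t)⁻¹) *
            (Matrix.fromBlocks (0 : Matrix (Fin p) (Fin p) ℝ) (0 : Matrix (Fin p) (Fin k) ℝ)
              (0 : Matrix (Fin k) (Fin p) ℝ) (D' t)) *
            (Matrix.fromBlocks (0 : Matrix (Fin p) (Fin p) ℝ) (0 : Matrix (Fin p) (Fin k) ℝ)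
              (0 : Matrix (Fin k) (Fin p) ℝ) (D t)⁻¹))
          = Matrix.fromBlocks 0 0 0 (-(D t)⁻¹ * D' t * (D t)⁻¹) := by
      simp [Matrix.fromBlocks_neg, Matrix.fromBlocks_multiply, Matrix.neg_mul]
    rw [hprod]
    rintro (i | i) (j | j)
    · simp only [Matrix.fromBlocks_apply₁₁, Matrix.zero_apply]
      exact hasDerivAt_const _ _
    · simp only [Matrix.fromBlocks_apply₁₂, Matrix.zero_apply]
      exact hasDerivAt_const _ _
    · simp only [Matrix.fromBlocks_apply₂₁, Matrix.zero_apply]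
      exact hasDerivAt_const _ _
    · simp only [Matrix.fromBlocks_apply₂₂]
      exact hasDerivAt_inv_entry D D' hD hdiff t i j
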